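/- (Snell implies Fermat) Let N₁, N₂ be norms on ℝⁿ with strictly convex unit balls and differentiable away from 0, pᵢ = ∇Nᵢ, Π a hyperplane with normal ν, X and Y points not on Π with X−Y not parallel to Π. If P₀ ∈ Π satisfies p₂(Y−P₀) − p₁(P₀−X) parallel to ν, then P₀ is the unique minimizer over Π of the functional F(P) = N₁(P−X) + N₂(Y−P). -/

import Mathlib

open RealInnerProductSpace
open Set Filter

private lemma deriv_line {n : ℕ} (N : EuclideanSpace ℝ (Fin n) → ℝ)
    (p x y : EuclideanSpace ℝ (Fin n)) (hp : HasGradientAt N p x) :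
    HasDerivAt (fun t : ℝ => N (x + t • y)) ⟪p, y⟫ 0 := by
  have hγ : HasDerivAt (fun t : ℝ => x + t • y) y 0 := by
    simpa using ((hasDerivAt_id (0:ℝ)).smul_const y).const_add x
  have hf := hp.hasFDerivAt
  rw [show x = x + (0:ℝ) • y by simp] at hf
  have h := hf.comp_hasDerivAt 0 hγ
  simpa [Function.comp_def, InnerProductSpace.toDual_apply_apply] using h

private lemma euler_id {n : ℕ} (N : EuclideanSpace ℝ (Fin n) → ℝ)
    (hsmul : ∀ (c : ℝ) x, N (c • x) = |c| * N x)
    (p x : EuclideanSpace ℝ (Fin n)) (hp : HasGradientAt N p x) :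
    ⟪p, x⟫ = N x := by
  have h1 : HasDerivAt (fun t : ℝ => N (x + t • x)) ⟪p, x⟫ 0 := deriv_line N p x x hp
  have h2 : HasDerivAt (fun t : ℝ => (1 + t) * N x) (N x) 0 := by
    simpa using ((hasDerivAt_id (0:ℝ)).const_add 1).mul_const (N x)
  have heq : (fun t : ℝ => N (x + t • x)) =ᶠ[nhds 0] (fun t : ℝ => (1 + t) * N x) := by
    filter_upwards [eventually_gt_nhds (show (-1:ℝ) < 0 by norm_num)] with t ht
    have : x + t • x = (1 + t) • x := by module
    rw [this, hsmul, abs_of_pos (by linarith)]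
  exact (h1.congr_of_eventuallyEq heq.symm).unique h2

private lemma support_le {n : ℕ} (N : EuclideanSpace ℝ (Fin n) → ℝ)
    (hadd : ∀ x y, N (x + y) ≤ N x + N y)
    (hsmul : ∀ (c : ℝ) x, N (c • x) = |c| * N x)
    (p x y : EuclideanSpace ℝ (Fin n)) (hp : HasGradientAt N p x) :
    ⟪p, y⟫ ≤ N y := by
  have h1 : HasDerivAt (fun t : ℝ => N (x + t • y)) ⟪p, y⟫ 0 := deriv_line N p x y hp
  have ht : Tendsto (slope (fun t : ℝ => N (x + t • y)) 0) (nhdsWithin 0 (Ioi 0)) (nhds ⟪p, y⟫) :=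
    (hasDerivAt_iff_tendsto_slope.mp h1).mono_left
      (nhdsWithin_mono _ (fun t ht => ne_of_gt ht))
  refine le_of_tendsto ht ?_
  filter_upwards [self_mem_nhdsWithin] with t (ht : 0 < t)
  rw [slope_def_field]
  have hb : N (x + t • y) ≤ N x + t * N y := by
    have := hadd x (t • y)
    rwa [hsmul, abs_of_pos ht] at this
  rw [div_le_iff₀ (by linarith : (0:ℝ) < t - 0)]
  simp only [zero_smul, add_zero, sub_zero]
  nlinarith

private lemma strict_support {n : ℕ} (N : EuclideanSpace ℝ (Fin n) → ℝ)
    (hadd : ∀ x y, N (x + y) ≤ N x + N y)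
    (hsmul : ∀ (c : ℝ) x, N (c • x) = |c| * N x)
    (hpos : ∀ x, x ≠ 0 → 0 < N x)
    (hstrict : ∀ x y, N x = 1 → N y = 1 → x ≠ y →
      ∀ t : ℝ, 0 < t → t < 1 → N (t • x + (1 - t) • y) < 1)
    (p x y : EuclideanSpace ℝ (Fin n)) (hx : x ≠ 0) (hy : y ≠ 0)
    (hp : HasGradientAt N p x) (heq : ⟪p, y⟫ = N y) :
    ∃ s : ℝ, 0 < s ∧ y = s • x := by
  have hNx := hpos x hx
  have hNy := hpos y hy
  have hNu : N ((N x)⁻¹ • x) = 1 := by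
    rw [hsmul, abs_of_pos (by positivity)]; field_simp
  have hNv : N ((N y)⁻¹ • y) = 1 := by
    rw [hsmul, abs_of_pos (by positivity)]; field_simp
  by_cases huv : (N x)⁻¹ • x = (N y)⁻¹ • y
  · refine ⟨N y / N x, by positivity, ?_⟩
    have h2 := congrArg (fun z => (N y) • z) huv
    simp only [smul_smul, mul_inv_cancel₀ (ne_of_gt hNy), one_smul] at h2
    rw [div_eq_mul_inv]; exact h2.symm
  · exfalso
    have hpu : ⟪p, (N x)⁻¹ • x⟫ = 1 := by
      rw [real_inner_smul_right p x ((N x)⁻¹), euler_id N hsmul p x hp]; field_simp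
    have hpv : ⟪p, (N y)⁻¹ • y⟫ = 1 := by
      rw [real_inner_smul_right p y ((N y)⁻¹), heq]; field_simp
    have hm : N ((1/2 : ℝ) • ((N x)⁻¹ • x) + (1 - 1/2 : ℝ) • ((N y)⁻¹ • y)) < 1 :=
      hstrict _ _ hNu hNv huv (1/2) (by norm_num) (by norm_num)
    have hle := support_le N hadd hsmul p x
      ((1/2 : ℝ) • ((N x)⁻¹ • x) + (1 - 1/2 : ℝ) • ((N y)⁻¹ • y)) hp
    have e0 := inner_add_right (𝕜 := ℝ) p ((1/2 : ℝ) • ((N x)⁻¹ • x))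
      ((1 - 1/2 : ℝ) • ((N y)⁻¹ • y))
    have e1 := real_inner_smul_right p ((N x)⁻¹ • x) (1/2)
    have e2 := real_inner_smul_right p ((N y)⁻¹ • y) (1 - 1/2)
    rw [e0, e1, e2, hpu, hpv] at hle
    norm_num at hle
    linarith


/-- (Snell implies Fermat) For strictly convex `C¹` norms `N₁, N₂`, a hyperplane
`Π = {P : P·ν = c}`, points `X, Y` off `Π` with `X−Y` not parallel to `Π`: if `P₀ ∈ Π`
satisfies `p₂(Y−P₀) − p₁(P₀−X) ∥ ν`, then `P₀` is the unique minimizer over `Π` of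
`F(P) = N₁(P−X) + N₂(Y−P)`. -/
theorem stmt7 {n : ℕ} (N₁ N₂ : EuclideanSpace ℝ (Fin n) → ℝ)
    (hN₁_add : ∀ x y, N₁ (x + y) ≤ N₁ x + N₁ y)
    (hN₁_smul : ∀ (c : ℝ) x, N₁ (c • x) = |c| * N₁ x)
    (hN₁_pos : ∀ x, x ≠ 0 → 0 < N₁ x)
    (hN₂_add : ∀ x y, N₂ (x + y) ≤ N₂ x + N₂ y)
    (hN₂_smul : ∀ (c : ℝ) x, N₂ (c • x) = |c| * N₂ x)
    (hN₂_pos : ∀ x, x ≠ 0 → 0 < N₂ x)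
    (hstrict₁ : ∀ x y, N₁ x = 1 → N₁ y = 1 → x ≠ y →
      ∀ t : ℝ, 0 < t → t < 1 → N₁ (t • x + (1 - t) • y) < 1)
    (hstrict₂ : ∀ x y, N₂ x = 1 → N₂ y = 1 → x ≠ y →
      ∀ t : ℝ, 0 < t → t < 1 → N₂ (t • x + (1 - t) • y) < 1)
    (p₁ p₂ : EuclideanSpace ℝ (Fin n) → EuclideanSpace ℝ (Fin n))
    (hp₁ : ∀ x, x ≠ 0 → HasGradientAt N₁ (p₁ x) x)
    (hp₂ : ∀ x, x ≠ 0 → HasGradientAt N₂ (p₂ x) x)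
    (ν : EuclideanSpace ℝ (Fin n)) (hν : ‖ν‖ = 1) (c : ℝ)
    (X Y : EuclideanSpace ℝ (Fin n))
    (hX : ⟪X, ν⟫ ≠ c) (hY : ⟪Y, ν⟫ ≠ c) (hXY : ⟪X - Y, ν⟫ ≠ 0)
    (P₀ : EuclideanSpace ℝ (Fin n)) (hP₀ : ⟪P₀, ν⟫ = c)
    (hsnell : ∃ lam : ℝ, p₂ (Y - P₀) - p₁ (P₀ - X) = lam • ν) :
    ∀ P, ⟪P, ν⟫ = c → P ≠ P₀ →
      N₁ (P₀ - X) + N₂ (Y - P₀) < N₁ (P - X) + N₂ (Y - P) := by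
  intro P hP hPne
  obtain ⟨lam, hlam⟩ := hsnell
  set u : EuclideanSpace ℝ (Fin n) := P₀ - X with hu_def
  set v : EuclideanSpace ℝ (Fin n) := Y - P₀ with hv_def
  set a : EuclideanSpace ℝ (Fin n) := P - X with ha_def
  set b : EuclideanSpace ℝ (Fin n) := Y - P with hb_def
  have hu : u ≠ 0 := by
    rw [hu_def, sub_ne_zero]
    intro h; apply hX; rw [← h, hP₀]
  have hv : v ≠ 0 := by
    rw [hv_def, sub_ne_zero]
    intro h; apply hY; rw [h, hP₀]
  have ha : a ≠ 0 := by
    rw [ha_def, sub_ne_zero]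
    intro h; apply hX; rw [← h, hP]
  have gu := hp₁ u hu
  have gv := hp₂ v hv
  -- inner product of P - P₀ with ν vanishes
  have hdν : ⟪P - P₀, ν⟫ = 0 := by rw [inner_sub_left, hP, hP₀, sub_self]
  -- Euler identities
  have eu : ⟪p₁ u, u⟫ = N₁ u := euler_id N₁ hN₁_smul (p₁ u) u gu
  have ev : ⟪p₂ v, v⟫ = N₂ v := euler_id N₂ hN₂_smul (p₂ v) v gv
  -- support inequalities
  have A1 : ⟪p₁ u, a⟫ ≤ N₁ a := support_le N₁ hN₁_add hN₁_smul (p₁ u) u a gu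
  have A2 : ⟪p₂ v, b⟫ ≤ N₂ b := support_le N₂ hN₂_add hN₂_smul (p₂ v) v b gv
  -- strictness on the first term
  have A1s : ⟪p₁ u, a⟫ < N₁ a := by
    rcases lt_or_eq_of_le A1 with h | h
    · exact h
    · exfalso
      obtain ⟨s, hs, hsa⟩ := strict_support N₁ hN₁_add hN₁_smul hN₁_pos hstrict₁
        (p₁ u) u a hu ha gu h
      have haν : ⟪a, ν⟫ = c - ⟪X, ν⟫ := by rw [ha_def, inner_sub_left, hP]
      have huν : ⟪u, ν⟫ = c - ⟪X, ν⟫ := by rw [hu_def, inner_sub_left, hP₀]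
      have hne0 : c - ⟪X, ν⟫ ≠ 0 := sub_ne_zero.mpr (Ne.symm hX)
      have : ⟪a, ν⟫ = s * ⟪u, ν⟫ := by rw [hsa, real_inner_smul_left]
      rw [haν, huν] at this
      have hs1 : (1:ℝ) = s := mul_right_cancel₀ hne0 (by rw [one_mul]; exact this)
      rw [← hs1, one_smul] at hsa
      apply hPne
      have := hsa
      rw [ha_def, hu_def] at this
      have := sub_left_injective.eq_iff.mp this
      exact this
  -- the key identity: ⟪p₁ u, a⟫ + ⟪p₂ v, b⟫ = N₁ u + N₂ v
  have key : ⟪p₁ u, a⟫ + ⟪p₂ v, b⟫ = N₁ u + N₂ v := by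
    have ha2 : a = u + (P - P₀) := by rw [ha_def, hu_def]; abel
    have hb2 : b = v - (P - P₀) := by rw [hb_def, hv_def]; abel
    have k1 : ⟪p₁ u, a⟫ = ⟪p₁ u, u⟫ + ⟪p₁ u, P - P₀⟫ := by
      rw [ha2]; exact inner_add_right _ _ _
    have k2 : ⟪p₂ v, b⟫ = ⟪p₂ v, v⟫ - ⟪p₂ v, P - P₀⟫ := by
      rw [hb2]; exact inner_sub_right _ _ _
    have hpd : ⟪p₁ u, P - P₀⟫ - ⟪p₂ v, P - P₀⟫ = 0 := by
      have hsplit : ⟪p₁ u - p₂ v, P - P₀⟫ = ⟪p₁ u, P - P₀⟫ - ⟪p₂ v, P - P₀⟫ :=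
        inner_sub_left _ _ _
      have hvec : p₁ u - p₂ v = (-lam) • ν := by
        rw [neg_smul, ← hlam]; abel
      rw [← hsplit, hvec, real_inner_smul_left, real_inner_comm, hdν, mul_zero]
    linarith
  linarith
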